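/- Let L > 0, c > L, f > 0, M ≥ 0. Let P : ℝ → ℂ be measurable with P(t+L) = P(t) for all t, ∫_0^L |P(t)|² dt ∈ (0, ∞), and set y_e(t) = e^{f t} P(t). Let d : ℝ → ℂ be measurable with |d(t)| ≤ M for all t, and y = y_e + d. Then ‖y‖_{L²(T, T+c)} / ‖y‖_{L²(T−L, T+c−L)} → e^{Lf} as T → +∞. -/

import Mathlib

open MeasureTheory intervalIntegral Filter

lemma periodic_intervalIntegrable_all {g : ℝ → ℝ} {L : ℝ} (hL : 0 < L)
    (hper : Function.Periodic g L) (hint : IntervalIntegrable g volume 0 L) :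
    ∀ a b : ℝ, IntervalIntegrable g volume a b := by
  have hwin : ∀ n : ℤ, IntervalIntegrable g volume ((n : ℝ) * L) ((n : ℝ) * L + L) := by
    intro n
    have h1 := hint.comp_sub_right ((n : ℝ) * L)
    have h2 : (fun x => g (x - (n : ℝ) * L)) = g := funext fun x => hper.sub_int_mul_eq n
    rw [h2] at h1
    rw [zero_add, add_comm] at h1
    exact h1
  have hchain : ∀ n : ℕ, IntervalIntegrable g volume (-((n : ℝ) * L)) ((n : ℝ) * L) := by
    intro n
    induction n with
    | zero => simp only [Nat.cast_zero, zero_mul, neg_zero]; exact IntervalIntegrable.refl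
    | succ n ih =>
      have hA : IntervalIntegrable g volume (-(((n : ℝ) + 1) * L)) (-((n : ℝ) * L)) := by
        have := hwin (-(n + 1))
        have e1 : (((-(n + 1) : ℤ)) : ℝ) * L = -(((n : ℝ) + 1) * L) := by push_cast; ring
        have e2 : (((-(n + 1) : ℤ)) : ℝ) * L + L = -((n : ℝ) * L) := by push_cast; ring
        rwa [e2, e1] at this
      have hB : IntervalIntegrable g volume ((n : ℝ) * L) (((n : ℝ) + 1) * L) := by
        have := hwin (n : ℤ)
        have e1 : (((n : ℤ)) : ℝ) * L = (n : ℝ) * L := by push_cast; ring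
        have e2 : (((n : ℤ)) : ℝ) * L + L = ((n : ℝ) + 1) * L := by push_cast; ring
        rwa [e2, e1] at this
      have := (hA.trans ih).trans hB
      push_cast
      exact this
  intro a b
  set n : ℕ := ⌈(max |a| |b|) / L⌉₊ with hn
  have hmax : max |a| |b| ≤ (n : ℝ) * L := by
    have h1 : (max |a| |b|) / L ≤ (n : ℝ) := Nat.le_ceil _
    calc max |a| |b| = (max |a| |b|) / L * L := by field_simp
    _ ≤ (n : ℝ) * L := mul_le_mul_of_nonneg_right h1 hL.le
  have ha : a ∈ Set.uIcc (-((n : ℝ) * L)) ((n : ℝ) * L) := by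
    rw [Set.mem_uIcc]
    have h2 : |a| ≤ (n : ℝ) * L := le_trans (le_max_left _ _) hmax
    exact Or.inl ⟨by linarith [neg_abs_le a], by linarith [le_abs_self a]⟩
  have hb : b ∈ Set.uIcc (-((n : ℝ) * L)) ((n : ℝ) * L) := by
    rw [Set.mem_uIcc]
    have h2 : |b| ≤ (n : ℝ) * L := le_trans (le_max_right _ _) hmax
    exact Or.inl ⟨by linarith [neg_abs_le b], by linarith [le_abs_self b]⟩
  exact (hchain n).mono_set (Set.uIcc_subset_uIcc ha hb)


/-- Convergence of the ratio of windowed norms of the corrupted output to `e^{Lf}` in the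
anti-stable case `f > 0` (equation (2.36) of the paper). -/
theorem perturbed_ratio_tendsto (L c f M : ℝ) (hL : 0 < L) (hc : c > L) (hf : 0 < f)
    (hM : 0 ≤ M)
    (P : ℝ → ℂ) (hPmeas : Measurable P) (hPper : ∀ t : ℝ, P (t + L) = P t)
    (hPpos : 0 < ∫ t in (0:ℝ)..L, ‖P t‖ ^ 2)
    (hPint : IntervalIntegrable (fun t => ‖P t‖ ^ 2) volume 0 L)
    (ye : ℝ → ℂ) (hye : ∀ t : ℝ, ye t = Complex.exp ((f : ℂ) * (t : ℂ)) * P t)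
    (d : ℝ → ℂ) (hdmeas : Measurable d) (hdM : ∀ t : ℝ, ‖d t‖ ≤ M)
    (y : ℝ → ℂ) (hy : ∀ t : ℝ, y t = ye t + d t) :
    Filter.Tendsto
      (fun T : ℝ => Real.sqrt (∫ t in T..(T + c), ‖y t‖ ^ 2) /
        Real.sqrt (∫ t in (T - L)..(T + c - L), ‖y t‖ ^ 2))
      Filter.atTop (nhds (Real.exp (L * f))) := by
  have hc0 : 0 < c := lt_trans hL hc
  -- abbreviations
  set E2 : ℝ → ℝ := fun t => Real.exp (2 * f * t) * ‖P t‖ ^ 2 with hE2def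
  set E1 : ℝ → ℝ := fun t => Real.exp (f * t) * ‖P t‖ with hE1def
  set G : ℝ → ℝ := fun T => ∫ t in T..(T + c), E2 t with hGdef
  set H : ℝ → ℝ := fun T => ∫ t in T..(T + c), E1 t with hHdef
  set Y : ℝ → ℝ := fun T => ∫ t in T..(T + c), ‖y t‖ ^ 2 with hYdef
  set q : ℝ := ∫ t in (0:ℝ)..L, ‖P t‖ ^ 2 with hqdef
  set p : ℝ := ∫ t in (0:ℝ)..L, ‖P t‖ with hpdef
  -- periodicity
  have hQper : Function.Periodic (fun t => ‖P t‖ ^ 2) L := fun t => by simp [hPper t]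
  have hnPper : Function.Periodic (fun t => ‖P t‖) L := fun t => by simp [hPper t]
  -- integrability
  have hQa : ∀ a b : ℝ, IntervalIntegrable (fun t => ‖P t‖ ^ 2) volume a b :=
    periodic_intervalIntegrable_all hL hQper hPint
  have hnP0 : IntervalIntegrable (fun t => ‖P t‖) volume 0 L := by
    have hdom : IntervalIntegrable (fun t : ℝ => 1 + ‖P t‖ ^ 2) volume 0 L :=
      (_root_.intervalIntegrable_const (c := (1:ℝ))).add hPint
    refine hdom.mono_fun' ?_ ?_
    · exact (hPmeas.norm.aestronglyMeasurable).restrict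
    · refine Filter.Eventually.of_forall fun x => ?_
      have : ‖P x‖ ≤ 1 + ‖P x‖ ^ 2 := by nlinarith [sq_nonneg (‖P x‖ - 1), norm_nonneg (P x)]
      simpa [Real.norm_eq_abs, abs_of_nonneg (norm_nonneg (P x))] using this
  have hnPa : ∀ a b : ℝ, IntervalIntegrable (fun t => ‖P t‖) volume a b :=
    periodic_intervalIntegrable_all hL hnPper hnP0
  have hcontexp : ∀ r : ℝ, Continuous fun t : ℝ => Real.exp (r * t) :=
    fun r => Real.continuous_exp.comp (continuous_const.mul continuous_id)
  have hE2a : ∀ a b : ℝ, IntervalIntegrable E2 volume a b := fun a b =>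
    (hQa a b).continuousOn_mul ((hcontexp (2*f)).continuousOn)
  have hE1a : ∀ a b : ℝ, IntervalIntegrable E1 volume a b := fun a b =>
    (hnPa a b).continuousOn_mul ((hcontexp f).continuousOn)
  have hymeas : Measurable y := by
    have hyeq : y = fun t : ℝ => Complex.exp ((f : ℂ) * (t : ℂ)) * P t + d t :=
      funext fun t => by rw [hy t, hye t]
    rw [hyeq]
    exact ((Complex.continuous_exp.measurable.comp
      (measurable_const.mul Complex.measurable_ofReal)).mul hPmeas).add hdmeas
  -- pointwise facts
  have hye_norm : ∀ t : ℝ, ‖ye t‖ = E1 t := by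
    intro t
    rw [hye t, norm_mul]
    have h1 : ((f : ℂ) * (t : ℂ)) = ((f * t : ℝ) : ℂ) := by push_cast; ring
    rw [h1, Complex.norm_exp, Complex.ofReal_re]
  have hE2E1 : ∀ t : ℝ, E2 t = E1 t ^ 2 := by
    intro t
    simp only [hE2def, hE1def]
    have : Real.exp (2 * f * t) = Real.exp (f * t) * Real.exp (f * t) := by
      rw [← Real.exp_add]; ring_nf
    rw [this]; ring
  have hub : ∀ t : ℝ, ‖y t‖ ^ 2 ≤ E2 t + (2 * M * E1 t + M ^ 2) := by
    intro t
    have h1 : ‖y t‖ ≤ E1 t + M := by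
      rw [hy t]
      calc ‖ye t + d t‖ ≤ ‖ye t‖ + ‖d t‖ := norm_add_le _ _
      _ ≤ E1 t + M := by rw [hye_norm t]; linarith [hdM t]
    have h2 : 0 ≤ E1 t := mul_nonneg (Real.exp_nonneg _) (norm_nonneg _)
    have h3 : 0 ≤ ‖y t‖ := norm_nonneg _
    rw [hE2E1 t]
    nlinarith
  have hlb : ∀ t : ℝ, E2 t - 2 * M * E1 t ≤ ‖y t‖ ^ 2 := by
    intro t
    have h1 : E1 t ≤ ‖y t‖ + M := by
      rw [← hye_norm t]
      have : ye t = y t - d t := by rw [hy t]; ring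
      rw [this]
      calc ‖y t - d t‖ ≤ ‖y t‖ + ‖d t‖ := norm_sub_le _ _
      _ ≤ ‖y t‖ + M := by linarith [hdM t]
    have h2 : 0 ≤ E1 t := mul_nonneg (Real.exp_nonneg _) (norm_nonneg _)
    have h3 : 0 ≤ ‖y t‖ := norm_nonneg _
    rw [hE2E1 t]
    rcases le_or_gt M (E1 t) with h | h
    · have h4 : 0 ≤ E1 t - M := by linarith
      have h5 : E1 t - M ≤ ‖y t‖ := by linarith
      nlinarith [mul_le_mul h5 h5 h4 h3]
    · nlinarith [mul_nonneg h2 (by linarith : (0:ℝ) ≤ 2 * M - E1 t)]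
  have hyint : ∀ a b : ℝ, IntervalIntegrable (fun t => ‖y t‖ ^ 2) volume a b := by
    intro a b
    have hdom : IntervalIntegrable (fun t => E2 t + (2 * M * E1 t + M ^ 2)) volume a b :=
      (hE2a a b).add (((hE1a a b).const_mul (2 * M)).add _root_.intervalIntegrable_const)
    refine hdom.mono_fun' ?_ ?_
    · exact ((hymeas.norm.pow_const 2).aestronglyMeasurable).restrict
    · refine Filter.Eventually.of_forall fun x => ?_
      have h0 : 0 ≤ ‖y x‖ ^ 2 := sq_nonneg _
      simpa [Real.norm_eq_abs, abs_of_nonneg h0] using hub x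
  -- integral bounds
  have hTc : ∀ T : ℝ, T ≤ T + c := fun T => by linarith
  have hHnonneg : ∀ T : ℝ, 0 ≤ H T := fun T =>
    intervalIntegral.integral_nonneg (hTc T)
      (fun u _ => mul_nonneg (Real.exp_nonneg _) (norm_nonneg _))
  have hYnonneg : ∀ T : ℝ, 0 ≤ Y T := fun T =>
    intervalIntegral.integral_nonneg (hTc T) (fun u _ => sq_nonneg _)
  have hYub : ∀ T : ℝ, Y T ≤ G T + (2 * M * H T + M ^ 2 * c) := by
    intro T
    have h1 : Y T ≤ ∫ t in T..(T + c), (E2 t + (2 * M * E1 t + M ^ 2)) :=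
      intervalIntegral.integral_mono_on (hTc T) (hyint T (T + c))
        ((hE2a T (T+c)).add (((hE1a T (T+c)).const_mul (2 * M)).add _root_.intervalIntegrable_const))
        (fun x _ => hub x)
    have h2 : (∫ t in T..(T + c), (E2 t + (2 * M * E1 t + M ^ 2)))
        = G T + (2 * M * H T + M ^ 2 * c) := by
      rw [intervalIntegral.integral_add (hE2a T (T+c))
        (((hE1a T (T+c)).const_mul (2 * M)).add _root_.intervalIntegrable_const),
        intervalIntegral.integral_add ((hE1a T (T+c)).const_mul (2 * M)) _root_.intervalIntegrable_const,
        intervalIntegral.integral_const_mul, intervalIntegral.integral_const, smul_eq_mul]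
      simp only [hGdef, hHdef]
      ring
    linarith
  have hYlb : ∀ T : ℝ, G T - 2 * M * H T ≤ Y T := by
    intro T
    have h1 : (∫ t in T..(T + c), (E2 t - 2 * M * E1 t)) ≤ Y T :=
      intervalIntegral.integral_mono_on (hTc T)
        ((hE2a T (T+c)).sub ((hE1a T (T+c)).const_mul (2 * M)))
        (hyint T (T + c)) (fun x _ => hlb x)
    have h2 : (∫ t in T..(T + c), (E2 t - 2 * M * E1 t)) = G T - 2 * M * H T := by
      rw [intervalIntegral.integral_sub (hE2a T (T+c)) ((hE1a T (T+c)).const_mul (2 * M)),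
        intervalIntegral.integral_const_mul]
    linarith
  -- counting periods
  set n0 : ℕ := ⌈c / L⌉₊ with hn0
  have hcn : c ≤ (n0 : ℝ) * L := by
    have h1 : c / L ≤ (n0 : ℝ) := Nat.le_ceil _
    calc c = c / L * L := by field_simp
    _ ≤ (n0 : ℝ) * L := mul_le_mul_of_nonneg_right h1 hL.le
  have hpnonneg : 0 ≤ p := by
    rw [hpdef]
    exact intervalIntegral.integral_nonneg hL.le (fun u _ => norm_nonneg _)
  have hPper_int : ∀ T : ℝ, (∫ t in T..(T + c), ‖P t‖) ≤ (n0 : ℝ) * p := by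
    intro T
    have hsplit : (∫ t in T..(T + (n0:ℝ) * L), ‖P t‖)
        = (∫ t in T..(T + c), ‖P t‖) + ∫ t in (T + c)..(T + (n0:ℝ) * L), ‖P t‖ :=
      (intervalIntegral.integral_add_adjacent_intervals (hnPa _ _) (hnPa _ _)).symm
    have h2 : 0 ≤ ∫ t in (T + c)..(T + (n0:ℝ) * L), ‖P t‖ :=
      intervalIntegral.integral_nonneg (by linarith) (fun u _ => norm_nonneg _)
    have hper_n : (∫ t in T..(T + (n0:ℝ) * L), ‖P t‖) = (n0 : ℝ) * p := by
      have h3 := hnPper.intervalIntegral_add_zsmul_eq (n0 : ℤ) T hnPa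
      have h4 : (∫ t in T..(T + L), ‖P t‖) = p := by
        rw [hpdef]
        have := hnPper.intervalIntegral_add_eq T 0
        simpa using this
      simp only [zsmul_eq_mul] at h3
      push_cast at h3
      rw [h4] at h3
      exact h3
    rw [hper_n] at hsplit
    linarith
  have hHub : ∀ T : ℝ, H T ≤ Real.exp (f * (T + c)) * ((n0 : ℝ) * p) := by
    intro T
    have h1 : H T ≤ ∫ t in T..(T + c), Real.exp (f * (T + c)) * ‖P t‖ := by
      apply intervalIntegral.integral_mono_on (hTc T) (hE1a T (T + c))
        ((hnPa T (T + c)).const_mul _)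
      intro x hx
      exact mul_le_mul_of_nonneg_right (Real.exp_le_exp.mpr
        (mul_le_mul_of_nonneg_left hx.2 hf.le)) (norm_nonneg _)
    rw [intervalIntegral.integral_const_mul] at h1
    calc H T ≤ Real.exp (f * (T + c)) * ∫ t in T..(T + c), ‖P t‖ := h1
    _ ≤ Real.exp (f * (T + c)) * ((n0:ℝ) * p) :=
      mul_le_mul_of_nonneg_left (hPper_int T) (Real.exp_nonneg _)
  -- lower bound on G
  have hq_shift : ∀ T : ℝ, (∫ t in T..(T + L), ‖P t‖ ^ 2) = q := by
    intro T
    rw [hqdef]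
    have := hQper.intervalIntegral_add_eq T 0
    simpa using this
  have hGlb : ∀ T : ℝ, Real.exp (2 * f * T) * q ≤ G T := by
    intro T
    have h1 : q ≤ ∫ t in T..(T + c), ‖P t‖ ^ 2 := by
      have hsplit : (∫ t in T..(T + c), ‖P t‖ ^ 2)
          = (∫ t in T..(T + L), ‖P t‖ ^ 2) + ∫ t in (T + L)..(T + c), ‖P t‖ ^ 2 :=
        (intervalIntegral.integral_add_adjacent_intervals (hQa _ _) (hQa _ _)).symm
      have h2 : 0 ≤ ∫ t in (T + L)..(T + c), ‖P t‖ ^ 2 :=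
        intervalIntegral.integral_nonneg (by linarith) (fun u _ => sq_nonneg _)
      rw [hsplit, hq_shift T]
      linarith
    have h3 : Real.exp (2 * f * T) * q ≤ Real.exp (2 * f * T) * ∫ t in T..(T + c), ‖P t‖ ^ 2 :=
      mul_le_mul_of_nonneg_left h1 (Real.exp_nonneg _)
    have h4 : Real.exp (2 * f * T) * (∫ t in T..(T + c), ‖P t‖ ^ 2)
        = ∫ t in T..(T + c), Real.exp (2 * f * T) * ‖P t‖ ^ 2 :=
      (intervalIntegral.integral_const_mul _ _).symm
    have h5 : (∫ t in T..(T + c), Real.exp (2 * f * T) * ‖P t‖ ^ 2) ≤ G T := by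
      apply intervalIntegral.integral_mono_on (hTc T) ((hQa T (T + c)).const_mul _)
        (hE2a T (T + c))
      intro x hx
      exact mul_le_mul_of_nonneg_right (Real.exp_le_exp.mpr
        (mul_le_mul_of_nonneg_left hx.1 (by linarith))) (sq_nonneg _)
    linarith
  have hGpos : ∀ T : ℝ, 0 < G T := fun T =>
    lt_of_lt_of_le (mul_pos (Real.exp_pos _) hPpos) (hGlb T)
  -- exact shift identity for G
  have hGshift : ∀ T : ℝ, G T = Real.exp (2 * f * L) * G (T - L) := by
    intro T
    have hsub := intervalIntegral.integral_comp_sub_right (a := T) (b := T + c) E2 L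
    have hpt : ∀ x : ℝ, E2 (x - L) = Real.exp (-(2 * f * L)) * E2 x := by
      intro x
      simp only [hE2def]
      have hQ : ‖P (x - L)‖ ^ 2 = ‖P x‖ ^ 2 := by
        have := hQper.sub_eq x
        simpa using this
      rw [hQ, ← mul_assoc, ← Real.exp_add]
      congr 2
      ring
    have h1 : (∫ x in T..(T + c), E2 (x - L)) = Real.exp (-(2 * f * L)) * G T := by
      simp_rw [hpt]
      rw [intervalIntegral.integral_const_mul, hGdef]
    have h2 : G (T - L) = ∫ x in (T - L)..(T + c - L), E2 x := by
      rw [hGdef]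
      simp only
      congr 1
      ring
    rw [h1] at hsub
    rw [h2, ← hsub, ← mul_assoc, ← Real.exp_add]
    simp
  -- error bound
  have hεbound : ∀ T : ℝ, |Y T - G T| ≤ 2 * M * H T + M ^ 2 * c := by
    intro T
    rw [abs_le]
    have h2 : 0 ≤ M ^ 2 * c := mul_nonneg (sq_nonneg _) hc0.le
    exact ⟨by linarith [hYlb T], by linarith [hYub T]⟩
  set C1 : ℝ := 2 * M * Real.exp (f * c) * ((n0:ℝ) * p) with hC1
  set C2 : ℝ := M ^ 2 * c with hC2
  have hC1nonneg : 0 ≤ C1 := by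
    rw [hC1]
    exact mul_nonneg (mul_nonneg (by linarith) (Real.exp_nonneg _))
      (mul_nonneg (Nat.cast_nonneg _) hpnonneg)
  have hC2nonneg : 0 ≤ C2 := by
    rw [hC2]; exact mul_nonneg (sq_nonneg _) hc0.le
  have hnum : ∀ T : ℝ, |Y T - G T| ≤ C1 * Real.exp (f * T) + C2 := by
    intro T
    have h1 : 2 * M * H T ≤ 2 * M * (Real.exp (f * (T + c)) * ((n0:ℝ) * p)) :=
      mul_le_mul_of_nonneg_left (hHub T) (by linarith)
    have h2 : Real.exp (f * (T + c)) = Real.exp (f * T) * Real.exp (f * c) := by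
      rw [← Real.exp_add]; congr 1; ring
    rw [h2] at h1
    have h3 : 2 * M * (Real.exp (f * T) * Real.exp (f * c) * ((n0:ℝ) * p))
        = C1 * Real.exp (f * T) := by rw [hC1]; ring
    calc |Y T - G T| ≤ 2 * M * H T + M ^ 2 * c := hεbound T
    _ ≤ C1 * Real.exp (f * T) + C2 := by rw [hC2]; linarith
  -- the bound tends to 0
  have hexp_tends : Tendsto (fun T : ℝ => Real.exp (f * T)) atTop atTop :=
    Real.tendsto_exp_atTop.comp (Tendsto.const_mul_atTop hf tendsto_id)
  have hinv : Tendsto (fun T : ℝ => (Real.exp (f * T))⁻¹) atTop (nhds 0) :=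
    hexp_tends.inv_tendsto_atTop
  have hRtends : Tendsto (fun T : ℝ => (C1 * Real.exp (f * T) + C2) / (Real.exp (2 * f * T) * q))
      atTop (nhds 0) := by
    have heq : ∀ T : ℝ, (C1 * Real.exp (f * T) + C2) / (Real.exp (2 * f * T) * q)
        = (C1 / q) * (Real.exp (f * T))⁻¹
          + (C2 / q) * ((Real.exp (f * T))⁻¹ * (Real.exp (f * T))⁻¹) := by
      intro T
      have h2 : Real.exp (2 * f * T) = Real.exp (f * T) * Real.exp (f * T) := by
        rw [← Real.exp_add]; congr 1; ring
      have h3 := Real.exp_ne_zero (f * T)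
      have h4 : q ≠ 0 := hPpos.ne'
      rw [h2]
      field_simp
    have hlim : Tendsto (fun T : ℝ => (C1 / q) * (Real.exp (f * T))⁻¹
        + (C2 / q) * ((Real.exp (f * T))⁻¹ * (Real.exp (f * T))⁻¹)) atTop
        (nhds ((C1 / q) * 0 + (C2 / q) * (0 * 0))) :=
      (tendsto_const_nhds.mul hinv).add (tendsto_const_nhds.mul (hinv.mul hinv))
    simp only [mul_zero, add_zero] at hlim
    exact hlim.congr (fun T => (heq T).symm)
  -- Y/G tends to 1
  have hratio : Tendsto (fun T : ℝ => Y T / G T) atTop (nhds 1) := by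
    have hkey : ∀ T : ℝ, |Y T / G T - 1|
        ≤ (C1 * Real.exp (f * T) + C2) / (Real.exp (2 * f * T) * q) := by
      intro T
      have hG := hGpos T
      have h1 : Y T / G T - 1 = (Y T - G T) / G T := by
        field_simp
      rw [h1, abs_div, abs_of_pos hG]
      exact div_le_div₀ (add_nonneg (mul_nonneg hC1nonneg (Real.exp_nonneg _)) hC2nonneg)
        (hnum T) (mul_pos (Real.exp_pos _) hPpos) (hGlb T)
    have h0 : Tendsto (fun T => Y T / G T - 1) atTop (nhds 0) :=
      squeeze_zero_norm (fun T => by simpa [Real.norm_eq_abs] using hkey T) hRtends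
    have h1 := h0.add (tendsto_const_nhds (x := (1:ℝ)))
    simpa using h1
  have hshift_tendsto : Tendsto (fun T : ℝ => T - L) atTop atTop := by
    have := tendsto_atTop_add_const_right atTop (-L) (tendsto_id (α := ℝ))
    exact this.congr (fun T => by simp only [id_eq]; ring)
  have hratio2 : Tendsto (fun T : ℝ => Y (T - L) / G (T - L)) atTop (nhds 1) :=
    hratio.comp hshift_tendsto
  -- eventual positivity of Y (T - L)
  have hev : ∀ᶠ T in atTop, 0 < Y (T - L) := by
    have h1 : ∀ᶠ T in atTop, (1:ℝ) / 2 < Y (T - L) / G (T - L) :=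
      hratio2.eventually (eventually_gt_nhds (by norm_num))
    filter_upwards [h1] with T hT
    have hG := hGpos (T - L)
    by_contra h
    push_neg at h
    have h2 : Y (T - L) / G (T - L) ≤ 0 := div_nonpos_iff.mpr (Or.inr ⟨h, hG.le⟩)
    linarith
  -- main ratio limit
  have hmain : Tendsto (fun T : ℝ => Y T / Y (T - L)) atTop (nhds (Real.exp (2 * f * L))) := by
    have hGY : Tendsto (fun T : ℝ => G (T - L) / Y (T - L)) atTop (nhds 1) := by
      have := hratio2.inv₀ one_ne_zero
      simpa only [inv_div, inv_one] using this
    have hprod : Tendsto (fun T : ℝ => Y T / G T * Real.exp (2 * f * L) * (G (T - L) / Y (T - L)))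
        atTop (nhds (1 * Real.exp (2 * f * L) * 1)) :=
      (hratio.mul tendsto_const_nhds).mul hGY
    rw [one_mul, mul_one] at hprod
    refine Tendsto.congr' ?_ hprod
    filter_upwards [hev] with T hY
    have hG1 : G T ≠ 0 := (hGpos T).ne'
    have hG2 : G (T - L) ≠ 0 := (hGpos (T - L)).ne'
    have hY2 : Y (T - L) ≠ 0 := hY.ne'
    rw [hGshift T]
    field_simp
  -- conclude via square roots
  have hsqrt : Tendsto (fun T : ℝ => Real.sqrt (Y T / Y (T - L))) atTop
      (nhds (Real.sqrt (Real.exp (2 * f * L)))) :=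
    (Real.continuous_sqrt.tendsto _).comp hmain
  have hval : Real.sqrt (Real.exp (2 * f * L)) = Real.exp (L * f) := by
    have h1 : Real.exp (2 * f * L) = Real.exp (L * f) * Real.exp (L * f) := by
      rw [← Real.exp_add]; congr 1; ring
    rw [h1, Real.sqrt_mul_self (Real.exp_nonneg _)]
  rw [hval] at hsqrt
  refine hsqrt.congr fun T => ?_
  rw [Real.sqrt_div (hYnonneg T)]
  rw [hYdef]
  simp only
  congr 2
  ring
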